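/- Let m > k > 0 be integers and let a ∈ (−k/m, 0) satisfy S(a,a) = 0. Then S(a,ξ) > 0 for every ξ ∈ (a, −a). -/

import Mathlib

/-- The polynomial S(a,ξ) = Σ_{j=0}^m [(−1)^j ξ^{2j}/(2j−1)]·
[C(m−1,j)(ma+k)a + C(m−1,j−1)(ka+m)], with C(m−1,j) = 0 for j < 0 or j ≥ m. -/
noncomputable def Spoly (m k : ℕ) (a ξ : ℝ) : ℝ :=
  ∑ j ∈ Finset.range (m + 1),
    ((-1 : ℝ) ^ j * ξ ^ (2 * j) / (2 * (j : ℝ) - 1)) *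
      ((Nat.choose (m - 1) j : ℝ) * ((m : ℝ) * a + (k : ℝ)) * a
        + (if j = 0 then 0 else (Nat.choose (m - 1) (j - 1) : ℝ))
            * ((k : ℝ) * a + (m : ℝ)))

namespace Stmt17Aux

/-- the j-th bracket coefficient -/
noncomputable def bc (m k : ℕ) (a : ℝ) (j : ℕ) : ℝ :=
  (Nat.choose (m - 1) j : ℝ) * ((m : ℝ) * a + (k : ℝ)) * a
    + (if j = 0 then 0 else (Nat.choose (m - 1) (j - 1) : ℝ)) * ((k : ℝ) * a + (m : ℝ))

lemma spoly_eq (m k : ℕ) (a x : ℝ) :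
    Spoly m k a x
      = ∑ j ∈ Finset.range (m + 1),
          ((-1 : ℝ) ^ j / (2 * (j : ℝ) - 1) * bc m k a j) * x ^ (2 * j) := by
  unfold Spoly bc
  refine Finset.sum_congr rfl fun j _ => by ring

lemma spoly_even (m k : ℕ) (a x : ℝ) : Spoly m k a (-x) = Spoly m k a x := by
  unfold Spoly
  refine Finset.sum_congr rfl fun j _ => by
    rw [Even.neg_pow (even_two_mul j)]

/-- Key algebraic identity. -/
lemma key (m k : ℕ) (hm : 0 < m) (a x : ℝ) :
    ∑ j ∈ Finset.range (m + 1), (-1 : ℝ) ^ j * x ^ (2 * j) * bc m k a j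
      = (1 - x ^ 2) ^ (m - 1) *
          (((m : ℝ) * a + k) * a - ((k : ℝ) * a + m) * x ^ 2) := by
  have hpow : ∀ j : ℕ, (-1 : ℝ) ^ j * x ^ (2 * j) = (-(x ^ 2)) ^ j := by
    intro j
    rw [pow_mul, ← mul_pow, neg_one_mul]
  have hbin : ∑ j ∈ Finset.range m, (-(x ^ 2)) ^ j * (Nat.choose (m - 1) j : ℝ)
      = (1 - x ^ 2) ^ (m - 1) := by
    have := add_pow (-(x ^ 2)) (1 : ℝ) (m - 1)
    rw [Nat.sub_add_cancel hm] at this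
    rw [show (1 : ℝ) - x ^ 2 = -(x ^ 2) + 1 by ring, this]
    refine Finset.sum_congr rfl fun j _ => by rw [one_pow, mul_one]
  have hsplit : ∀ j : ℕ, (-1 : ℝ) ^ j * x ^ (2 * j) * bc m k a j
      = (-(x ^ 2)) ^ j * (Nat.choose (m - 1) j : ℝ) * (((m : ℝ) * a + k) * a)
        + (-(x ^ 2)) ^ j * (if j = 0 then 0 else (Nat.choose (m - 1) (j - 1) : ℝ))
            * (((k : ℝ) * a + m)) := by
    intro j
    rw [← hpow]
    unfold bc
    ring
  simp only [hsplit]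
  rw [Finset.sum_add_distrib]
  have h1 : ∑ j ∈ Finset.range (m + 1),
      (-(x ^ 2)) ^ j * (Nat.choose (m - 1) j : ℝ) * (((m : ℝ) * a + k) * a)
      = (1 - x ^ 2) ^ (m - 1) * (((m : ℝ) * a + k) * a) := by
    rw [Finset.sum_range_succ]
    have hz : Nat.choose (m - 1) m = 0 := Nat.choose_eq_zero_of_lt (by omega)
    rw [hz, ← Finset.sum_mul, hbin]
    push_cast
    ring
  have h2 : ∑ j ∈ Finset.range (m + 1),
      (-(x ^ 2)) ^ j * (if j = 0 then 0 else (Nat.choose (m - 1) (j - 1) : ℝ))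
        * (((k : ℝ) * a + m))
      = (1 - x ^ 2) ^ (m - 1) * (-(x ^ 2)) * ((k : ℝ) * a + m) := by
    rw [Finset.sum_range_succ']
    have hz : ((-(x ^ 2)) ^ (0 : ℕ) *
        (if (0 : ℕ) = 0 then (0 : ℝ) else ((m - 1).choose (0 - 1) : ℝ))) * ((k : ℝ) * a + m)
        = 0 := by simp
    rw [hz, add_zero]
    simp only [Nat.add_sub_cancel, if_neg (Nat.succ_ne_zero _)]
    have : ∀ i : ℕ, (-(x ^ 2)) ^ (i + 1) * (Nat.choose (m - 1) i : ℝ) * ((k : ℝ) * a + m)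
        = ((-(x ^ 2)) ^ i * (Nat.choose (m - 1) i : ℝ)) * ((-(x ^ 2)) * ((k : ℝ) * a + m)) := by
      intro i; rw [pow_succ]; ring
    simp only [this]
    rw [← Finset.sum_mul, hbin]
    ring
  rw [h1, h2]
  ring

/-- derivative of Spoly -/
lemma spoly_hasDerivAt (m k : ℕ) (a x : ℝ) :
    HasDerivAt (fun x => Spoly m k a x)
      (∑ j ∈ Finset.range (m + 1),
        ((-1 : ℝ) ^ j / (2 * (j : ℝ) - 1) * bc m k a j) * (2 * j * x ^ (2 * j - 1))) x := by
  have : (fun x => Spoly m k a x)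
      = fun x => ∑ j ∈ Finset.range (m + 1),
          ((-1 : ℝ) ^ j / (2 * (j : ℝ) - 1) * bc m k a j) * x ^ (2 * j) := by
    funext y; exact spoly_eq m k a y
  rw [this]
  apply HasDerivAt.fun_sum
  intro j _
  have h := (hasDerivAt_pow (2 * j) x).const_mul
    ((-1 : ℝ) ^ j / (2 * (j : ℝ) - 1) * bc m k a j)
  convert h using 1
  · rfl
  push_cast
  ring

/-- x·S'(x) − S(x) equals the nice closed form. -/
lemma key2 (m k : ℕ) (hm : 0 < m) (a x : ℝ) :
    (∑ j ∈ Finset.range (m + 1),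
        ((-1 : ℝ) ^ j / (2 * (j : ℝ) - 1) * bc m k a j) * (2 * j * x ^ (2 * j - 1))) * x
      - Spoly m k a x
      = (1 - x ^ 2) ^ (m - 1) *
          (((m : ℝ) * a + k) * a - ((k : ℝ) * a + m) * x ^ 2) := by
  rw [spoly_eq, ← key m k hm a x, Finset.sum_mul, ← Finset.sum_sub_distrib]
  refine Finset.sum_congr rfl fun j _ => ?_
  rcases j with _ | i
  · norm_num
  · have h1 : 2 * (i + 1) - 1 = 2 * i + 1 := by omega
    have h2 : (2 * ((i : ℝ) + 1) - 1) ≠ 0 := by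
      have : (0 : ℝ) ≤ (i : ℝ) := Nat.cast_nonneg i
      nlinarith
    rw [h1]
    have hxp : x ^ (2 * i + 1) * x = x ^ (2 * (i + 1)) := by
      rw [← pow_succ]; ring_nf
    push_cast
    field_simp
    ring

end Stmt17Aux

open Stmt17Aux in
/-- if a ∈ (−k/m, 0) and S(a,a) = 0, then S(a,ξ) > 0 for all
ξ ∈ (a, −a). -/
theorem stmt_17 (m k : ℕ) (hk : 0 < k) (hkm : k < m)
    (a : ℝ) (ha₁ : -(k : ℝ) / (m : ℝ) < a) (ha₂ : a < 0)
    (hS : Spoly m k a a = 0) :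
    ∀ ξ : ℝ, a < ξ → ξ < -a → 0 < Spoly m k a ξ := by
  have hm : 0 < m := lt_trans hk hkm
  have hmR : (0 : ℝ) < m := by exact_mod_cast hm
  have hkR : (0 : ℝ) < k := by exact_mod_cast hk
  have hkmR : (k : ℝ) < m := by exact_mod_cast hkm
  -- m a + k > 0
  have hma : 0 < (m : ℝ) * a + k := by
    have := (div_lt_iff₀ hmR).mp ha₁
    linarith
  -- a > -1
  have ha3 : -1 < a := by
    have h1 : -(k : ℝ) / m > -1 := by
      rw [gt_iff_lt, neg_div, neg_lt_neg_iff, div_lt_one hmR]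
      exact hkmR
    linarith
  -- k a + m > 0
  have hka : 0 < (k : ℝ) * a + m := by nlinarith
  -- A < 0
  have hA : ((m : ℝ) * a + k) * a < 0 := mul_neg_of_pos_of_neg hma ha₂
  -- -a ∈ Ioo 0 1
  have hna : -a ∈ Set.Ioo (0 : ℝ) 1 := ⟨by linarith, by linarith⟩
  -- the quotient function u
  set u : ℝ → ℝ := fun x => Spoly m k a x / x with hu_def
  have hu : ∀ x ∈ Set.Ioo (0 : ℝ) 1, HasDerivAt u
      ((1 - x ^ 2) ^ (m - 1) *
        (((m : ℝ) * a + k) * a - ((k : ℝ) * a + m) * x ^ 2) / x ^ 2) x := by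
    intro x hx
    have hx0 : x ≠ 0 := ne_of_gt hx.1
    have hd := (spoly_hasDerivAt m k a x).div (hasDerivAt_id x) hx0
    simp only [id_eq, mul_one] at hd
    rw [key2 m k hm a x] at hd
    exact hd
  -- u is strictly decreasing on (0,1)
  have hanti : StrictAntiOn u (Set.Ioo (0 : ℝ) 1) := by
    apply strictAntiOn_of_deriv_neg (convex_Ioo 0 1)
    · exact fun x hx => ((hu x hx).continuousAt).continuousWithinAt
    · rw [interior_Ioo]
      intro x hx
      rw [(hu x hx).deriv]
      apply div_neg_of_neg_of_pos
      · apply mul_neg_of_pos_of_neg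
        · have h12 : 0 < 1 - x ^ 2 := by nlinarith [hx.1, hx.2]
          exact pow_pos h12 _
        · nlinarith [sq_nonneg x, hx.1]
      · exact pow_pos hx.1 2
  -- u (-a) = 0
  have hSna : Spoly m k a (-a) = 0 := by
    rw [show -a = -(a) from rfl, spoly_even m k a a]; exact hS
  have huna : u (-a) = 0 := by simp [hu_def, hSna]
  -- positive case
  have hpos : ∀ x : ℝ, 0 < x → x < -a → 0 < Spoly m k a x := by
    intro x hx1 hx2
    have hxI : x ∈ Set.Ioo (0 : ℝ) 1 := ⟨hx1, by linarith⟩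
    have hux : 0 < u x := by
      have := hanti hxI hna hx2
      rw [huna] at this
      exact this
    have : Spoly m k a x = x * u x := by
      rw [hu_def]; field_simp
    rw [this]
    exact mul_pos hx1 hux
  -- value at 0
  have h0 : Spoly m k a 0 = -(((m : ℝ) * a + k) * a) := by
    unfold Spoly
    rw [Finset.sum_eq_single 0]
    · norm_num
    · intro j _ hj0
      have h2j : 2 * j ≠ 0 := by omega
      rw [zero_pow h2j]
      ring
    · intro h
      exact absurd (Finset.mem_range.mpr (by omega)) h
  intro ξ hξ1 hξ2
  rcases lt_trichotomy ξ 0 with hξ | hξ | hξ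
  · have : Spoly m k a ξ = Spoly m k a (-ξ) := by
      rw [← spoly_even m k a (-ξ), neg_neg]
    rw [this]
    exact hpos (-ξ) (by linarith) (by linarith)
  · rw [hξ, h0]; linarith
  · exact hpos ξ hξ hξ2
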